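/- Let G be a simple graph on n vertices with no isolated vertices and let d_min be its minimum vertex degree. If d_min ≤ (n-1)/2, then the largest eigenvalue λ_n of the normalized graph Laplacian of G satisfies λ_n ≥ 1 + 1/√(d_min (n − 1 − d_min)). -/

import Mathlib

open Finset

/-- The normalized graph Laplacian `Lf(x) = f(x) - (1/d(x)) ∑_{y ~ x} f(y)`. -/
noncomputable def normLap {V : Type*} [Fintype V] [DecidableEq V] (G : SimpleGraph V)
    [DecidableRel G.Adj] (f : V → ℝ) : V → ℝ :=
  fun x => f x - (∑ y ∈ G.neighborFinset x, f y) / (G.degree x : ℝ)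

/-- `μ` is an eigenvalue of the normalized Laplacian of `G`. -/
def IsNormLapEigenvalue {V : Type*} [Fintype V] [DecidableEq V] (G : SimpleGraph V)
    [DecidableRel G.Adj] (μ : ℝ) : Prop :=
  ∃ f : V → ℝ, f ≠ 0 ∧ normLap G f = μ • f

/-- `μ` is the largest eigenvalue of the normalized Laplacian of `G`. -/
def IsMaxNormLapEigenvalue {V : Type*} [Fintype V] [DecidableEq V] (G : SimpleGraph V)
    [DecidableRel G.Adj] (μ : ℝ) : Prop :=
  IsNormLapEigenvalue G μ ∧ ∀ ν, IsNormLapEigenvalue G ν → ν ≤ μ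

section Aux

set_option maxHeartbeats 3200000

set_option maxHeartbeats 1600000 in
private lemma caseTwoAux (d m r E : ℝ) (hd : 1 ≤ d) (hdm : d + 1 ≤ m) (hr2 : r^2 = d*m)
    (hr0 : 0 < r) (hrd : d ≤ r) (hrm : r ≤ m) (hE1 : E ≤ d*m) :
    0 ≤ d^2*m^5 - d*(d-1)*m^4*(r+1) - m^4*E + 2*E^2*m^2*r - (r+1)*m*(m-1)*E^2 - E^3
      - d*m^4 := by
  have hr1 : 1 ≤ r := le_trans hd hrd
  set β : ℝ := m*(r-1) + (r+1-d) with hβ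
  set α : ℝ := d*m - (d-1)*(r+1) - 1 with hα
  have hβ1 : 1 ≤ β := by nlinarith
  have hβ0 : 0 < β := by linarith
  have hα1 : m - d ≤ α := by nlinarith
  have hα0 : 0 < α := by linarith
  have hm0 : (0:ℝ) < m := by linarith
  have hPQ : d^2*m^5 - d*(d-1)*m^4*(r+1) - m^4*E + 2*E^2*m^2*r - (r+1)*m*(m-1)*E^2 - E^3
        - d*m^4
      = (m*β*E^2 - m^4*E + d*m^4*α) + E^2*(d*m - E) := by rw [hβ, hα]; ring
  rw [hPQ]
  have hE2 : 0 ≤ E^2*(d*m - E) := mul_nonneg (sq_nonneg E) (by linarith)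
  have hQ : 0 ≤ m*β*E^2 - m^4*E + d*m^4*α := by
    rcases le_or_gt (2*d*β) (m^2) with hc | hc
    · -- Q decreasing on [0,dm]: Q(E) ≥ Q(dm) ≥ 0
      have hQdm : 0 ≤ d*β + m*α - m^2 := by
        have h6 : d*β + m*α - m^2 = m*(d-1)*(m-2) + m*(r-2) + d*(r+1-d) := by
          rw [hβ, hα]; ring
        rw [h6]
        have h3 : 0 ≤ d*(r+1-d) := mul_nonneg (by linarith) (by linarith)
        rcases le_or_gt 2 r with h7 | h7
        · have h1 : 0 ≤ m*(d-1)*(m-2) :=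
            mul_nonneg (mul_nonneg (by linarith) (by linarith)) (by linarith)
          have h2 : 0 ≤ m*(r-2) := mul_nonneg (by linarith) (by linarith)
          linarith
        · nlinarith [mul_nonneg (by linarith : (0:ℝ) ≤ d - 1) (by linarith : (0:ℝ) ≤ m - 2),
            mul_nonneg (by linarith : (0:ℝ) ≤ d - 1) (by linarith : (0:ℝ) ≤ r - 1),
            mul_nonneg hm0.le (by linarith : (0:ℝ) ≤ 2 - r),
            mul_nonneg (by linarith : (0:ℝ) ≤ r - d) (by linarith : (0:ℝ) ≤ m - r)]
      have hQd : (0:ℝ) ≤ d*m^3*(d*β + m*α - m^2) := by positivity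
      have key : (m*β*E^2 - m^4*E + d*m^4*α) - d*m^3*(d*β + m*α - m^2)
          = (d*m - E)*(m^4 - m*β*(E + d*m)) := by ring
      have h3 : m*β*(E + d*m) ≤ m^4 := by
        have h4 : m*β*(E + d*m) ≤ m*β*(2*(d*m)) :=
          mul_le_mul_of_nonneg_left (by linarith) (by positivity)
        have h5 : m*β*(2*(d*m)) = (2*d*β)*m^2 := by ring
        nlinarith [sq_nonneg m]
      have h2 : 0 ≤ (d*m - E)*(m^4 - m*β*(E + d*m)) :=
        mul_nonneg (by linarith) (by linarith)
      linarith
    · -- discriminant case: 4dβα ≥ m³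
      have hdisc : m^3 ≤ 4*d*β*α := by
        have hr_am : 2*r ≤ d + m := by
          by_contra h
          push_neg at h
          nlinarith [mul_pos (by linarith : (0:ℝ) < 2*r - (d+m))
            (by linarith : (0:ℝ) < 2*r + (d+m)), sq_nonneg (d-m)]
        have h2α : m ≤ 2*α := by
          nlinarith [mul_nonneg (by linarith : (0:ℝ) ≤ d) (by linarith : (0:ℝ) ≤ m - d - 1)]
        have h1 : m^2*m ≤ (2*d*β)*(2*α) :=
          mul_le_mul hc.le h2α hm0.le (by positivity)
        nlinarith
      have h4 : (0:ℝ) < 4*m*β := by positivity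
      have hid : 4*m*β*(m*β*E^2 - m^4*E + d*m^4*α)
          = (2*m*β*E - m^4)^2 + m^5*(4*d*β*α - m^3) := by ring
      have h5 : 0 ≤ 4*m*β*(m*β*E^2 - m^4*E + d*m^4*α) := by
        rw [hid]
        have := sq_nonneg (2*m*β*E - m^4)
        have h6 : (0:ℝ) ≤ m^5*(4*d*β*α - m^3) :=
          mul_nonneg (by positivity) (by linarith)
        linarith
      by_contra h
      push_neg at h
      nlinarith [mul_pos h4 (by linarith : (0:ℝ) < -(m*β*E^2 - m^4*E + d*m^4*α))]
  linarith

set_option maxHeartbeats 1600000 in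
private lemma keyIneqAux (d m r E t2 s2 : ℝ) (hd : 1 ≤ d)
    (hcase : m = d ∨ d + 1 ≤ m)
    (hr2 : r^2 = d*m) (hr0 : 0 < r)
    (ht0 : 0 ≤ t2) (ht1 : t2 ≤ d*(d-1))
    (hs0 : 0 ≤ s2) (hs1 : s2 ≤ m*(m-1))
    (hE0 : 0 ≤ E) (hE1 : E ≤ d*m) (hds : d*m ≤ E + s2) :
    r*(-(2*r*d) + t2 - 2*(E/m^2)*E + (E/m^2)^2*s2)
      + (d*r^2 + (d + t2 + E) + (E/m^2)^2*(E+s2)) ≤ 0 := by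
  have hdm : d ≤ m := by rcases hcase with h | h <;> linarith
  have hm0 : (0:ℝ) < m := by linarith
  have hrd : d ≤ r := by
    by_contra h
    push_neg at h
    nlinarith [mul_pos (by linarith : (0:ℝ) < d - r) (by linarith : (0:ℝ) < d + r)]
  have hrm : r ≤ m := by
    by_contra h
    push_neg at h
    nlinarith [mul_pos (by linarith : (0:ℝ) < r - m) (by linarith : (0:ℝ) < r + m)]
  set TP : ℝ := d*r^2*m^4 - t2*(r+1)*m^4 - (E+d)*m^4 + 2*E^2*r*m^2 - E^2*s2*(r+1) - E^3
    with hTPdef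
  have hTP : 0 ≤ TP := by
    have hmono : d*r^2*m^4 - (d*(d-1))*(r+1)*m^4 - (E+d)*m^4 + 2*E^2*r*m^2
        - E^2*(m*(m-1))*(r+1) - E^3 ≤ TP := by
      rw [hTPdef]
      nlinarith [mul_nonneg (mul_nonneg (by linarith : (0:ℝ) ≤ d*(d-1) - t2)
          (by linarith : (0:ℝ) ≤ r+1)) (by positivity : (0:ℝ) ≤ m^4),
        mul_nonneg (mul_nonneg (by linarith : (0:ℝ) ≤ m*(m-1) - s2)
          (by linarith : (0:ℝ) ≤ r+1)) (sq_nonneg E)]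
    rcases hcase with hmd | hmd
    · -- m = d, then r = d and the expression is E(E-d)(d³-E)
      subst hmd
      have hrd2 : r = m := by
        have h0 : (r - m)*(r + m) = 0 := by nlinarith
        rcases mul_eq_zero.1 h0 with h1 | h1
        · linarith
        · linarith
      have heq : m*r^2*m^4 - (m*(m-1))*(r+1)*m^4 - (E+m)*m^4 + 2*E^2*r*m^2
          - E^2*(m*(m-1))*(r+1) - E^3 = E*(E-m)*(m^3-E) := by
        rw [hrd2]; ring
      have hEd : m ≤ E := by nlinarith
      have hEc : E ≤ m^3 := by nlinarith
      have hnn : 0 ≤ E*(E-m)*(m^3-E) :=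
        mul_nonneg (mul_nonneg (by linarith) (by linarith)) (by linarith)
      linarith
    · have h2 := caseTwoAux d m r E hd hmd hr2 hr0 hrd hrm hE1
      have heq : d*r^2*m^4 - (d*(d-1))*(r+1)*m^4 - (E+d)*m^4 + 2*E^2*r*m^2
          - E^2*(m*(m-1))*(r+1) - E^3
          = d^2*m^5 - d*(d-1)*m^4*(r+1) - m^4*E + 2*E^2*m^2*r - (r+1)*m*(m-1)*E^2 - E^3
            - d*m^4 := by
        rw [hr2]; ring
      linarith
  have hm4 : (0:ℝ) < m^4 := by positivity
  have heq : r*(-(2*r*d) + t2 - 2*(E/m^2)*E + (E/m^2)^2*s2)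
      + (d*r^2 + (d + t2 + E) + (E/m^2)^2*(E+s2)) = -TP/m^4 := by
    rw [hTPdef]
    field_simp
    ring
  rw [heq, neg_div]
  exact neg_nonpos.2 (div_nonneg hTP hm4.le)

variable {V : Type*} [Fintype V] [DecidableEq V]

/-- The symmetrized normalized Laplacian matrix `I - D^{-1/2} A D^{-1/2}`. -/
private noncomputable def symMat (G : SimpleGraph V) [DecidableRel G.Adj] : Matrix V V ℝ :=
  Matrix.of fun x y => (if x = y then (1:ℝ) else 0) -
    (if G.Adj x y then 1 / (Real.sqrt (G.degree x) * Real.sqrt (G.degree y)) else 0)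

private lemma symMat_herm (G : SimpleGraph V) [DecidableRel G.Adj] :
    (symMat G).IsHermitian := by
  refine Matrix.IsHermitian.ext fun x y => ?_
  simp only [symMat, Matrix.of_apply, star_trivial]
  have h1 : (if y = x then (1:ℝ) else 0) = (if x = y then (1:ℝ) else 0) := by
    simp [eq_comm]
  have h2 : (if G.Adj y x then 1 / (Real.sqrt (G.degree y) * Real.sqrt (G.degree x)) else 0)
      = (if G.Adj x y then 1 / (Real.sqrt (G.degree x) * Real.sqrt (G.degree y)) else 0) := by
    exact if_congr (G.adj_comm y x) (by rw [mul_comm]) rfl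
  rw [h1, h2]

private lemma symMat_mulVec (G : SimpleGraph V) [DecidableRel G.Adj] (u : V → ℝ) (x : V) :
    (Matrix.mulVec (symMat G) u) x = u x - ∑ y ∈ G.neighborFinset x,
      u y / (Real.sqrt (G.degree x) * Real.sqrt (G.degree y)) := by
  rw [Matrix.mulVec]
  simp only [dotProduct, symMat, Matrix.of_apply, sub_mul, ite_mul, one_mul,
    zero_mul, Finset.sum_sub_distrib, Finset.sum_ite_eq, Finset.mem_univ, if_pos]
  rw [SimpleGraph.neighborFinset_eq_filter, Finset.sum_filter]
  congr 1
  apply Finset.sum_congr rfl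
  intro y _
  split
  · rw [one_div, inv_mul_eq_div]
  · rfl

private lemma transfer_eig (G : SimpleGraph V) [DecidableRel G.Adj]
    (hdeg : ∀ v : V, 1 ≤ G.degree v) (μ : ℝ)
    (h : Module.End.HasEigenvalue (Matrix.toEuclideanLin (symMat G)) μ) :
    IsNormLapEigenvalue G μ := by
  obtain ⟨g, hg⟩ := h.exists_hasEigenvector
  have hgeq : Matrix.toEuclideanLin (symMat G) g = μ • g := hg.apply_eq_smul
  have hg0 : g ≠ 0 := hg.right
  set u : V → ℝ := WithLp.equiv 2 (V → ℝ) g with hu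
  have hu0 : u ≠ 0 := by
    intro h0
    apply hg0
    have := congrArg (WithLp.equiv 2 (V → ℝ)).symm h0
    rwa [Equiv.symm_apply_apply, WithLp.equiv_symm_apply, WithLp.toLp_zero] at this
  have hsq : ∀ x : V, (0:ℝ) < Real.sqrt (G.degree x) := by
    intro x
    apply Real.sqrt_pos.2
    exact_mod_cast Nat.lt_of_lt_of_le Nat.zero_lt_one (hdeg x)
  have hmv : ∀ x, u x - ∑ y ∈ G.neighborFinset x,
      u y / (Real.sqrt (G.degree x) * Real.sqrt (G.degree y)) = μ * u x := by
    intro x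
    have h1 := congrArg (fun z => WithLp.equiv 2 (V → ℝ) z x) hgeq
    change (Matrix.mulVec (symMat G) u) x = (WithLp.equiv 2 (V → ℝ)) (μ • g) x at h1
    rw [symMat_mulVec G u x] at h1
    have h2 : (WithLp.equiv 2 (V → ℝ)) (μ • g) x = μ * u x := by
      rw [hu]
      rfl
    rwa [h2] at h1
  refine ⟨fun x => u x / Real.sqrt (G.degree x), ?_, ?_⟩
  · intro hf
    apply hu0
    funext x
    have h3 := congrFun hf x
    simp only [Pi.zero_apply] at h3 ⊢
    have := div_eq_zero_iff.1 h3
    rcases this with h4 | h4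
    · exact h4
    · exact absurd h4 (hsq x).ne'
  · funext x
    simp only [normLap, Pi.smul_apply, smul_eq_mul]
    set sx := Real.sqrt ((G.degree x : ℝ)) with hsxdef
    have hsx : sx ≠ 0 := (hsq x).ne'
    have hdx : ((G.degree x : ℝ)) = sx * sx :=
      (Real.mul_self_sqrt (Nat.cast_nonneg _)).symm
    rw [hdx]
    have hx := hmv x
    have hS : ∑ y ∈ G.neighborFinset x,
        u y / (sx * Real.sqrt (G.degree y))
        = (∑ y ∈ G.neighborFinset x, u y / Real.sqrt (G.degree y)) * (1 / sx) := by
      rw [Finset.sum_mul]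
      apply Finset.sum_congr rfl
      intro y _
      ring
    rw [hS] at hx
    linear_combination (1 / sx) * hx

open scoped RealInnerProductSpace in
private lemma rayleigh_le_eig (G : SimpleGraph V) [DecidableRel G.Adj] [Nonempty V]
    (g : EuclideanSpace ℝ V) (hg : g ≠ 0) :
    ∃ μ : ℝ, Module.End.HasEigenvalue (Matrix.toEuclideanLin (symMat G)) μ ∧
      ⟪(Matrix.toEuclideanLin (symMat G)) g, g⟫ / ‖g‖^2 ≤ μ := by
  set T := Matrix.toEuclideanLin (symMat G) with hT
  have hsym : T.IsSymmetric := Matrix.isHermitian_iff_isSymmetric.1 (symMat_herm G)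
  haveI : Nontrivial (EuclideanSpace ℝ V) := (WithLp.equiv 2 (V → ℝ)).nontrivial
  refine ⟨_, hsym.hasEigenvalue_iSup_of_finiteDimensional, ?_⟩
  have hbdd : BddAbove (Set.range fun x : {x : EuclideanSpace ℝ V // x ≠ 0} =>
      RCLike.re ⟪T x, (x : EuclideanSpace ℝ V)⟫ / ‖(x : EuclideanSpace ℝ V)‖^2) := by
    refine ⟨‖LinearMap.toContinuousLinearMap T‖, ?_⟩
    rintro y ⟨x, rfl⟩
    have hcoe : (LinearMap.toContinuousLinearMap T) (x : EuclideanSpace ℝ V) = T x := by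
      simp
    have h1 : ⟪T (x : EuclideanSpace ℝ V), (x : EuclideanSpace ℝ V)⟫
        ≤ ‖T (x : EuclideanSpace ℝ V)‖ * ‖(x : EuclideanSpace ℝ V)‖ :=
      real_inner_le_norm _ _
    have h2 : ‖T (x : EuclideanSpace ℝ V)‖
        ≤ ‖LinearMap.toContinuousLinearMap T‖ * ‖(x : EuclideanSpace ℝ V)‖ := by
      rw [← hcoe]
      exact ContinuousLinearMap.le_opNorm _ _
    have h3 : (0:ℝ) < ‖(x : EuclideanSpace ℝ V)‖ := norm_pos_iff.2 x.2
    have h4 : RCLike.re ⟪T x, (x : EuclideanSpace ℝ V)⟫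
        = ⟪T (x : EuclideanSpace ℝ V), (x : EuclideanSpace ℝ V)⟫ := rfl
    dsimp only
    rw [h4, div_le_iff₀ (by positivity)]
    nlinarith [norm_nonneg (T (x : EuclideanSpace ℝ V)), norm_nonneg
      (LinearMap.toContinuousLinearMap T)]
  have hle := le_ciSup hbdd (⟨g, hg⟩ : {x : EuclideanSpace ℝ V // x ≠ 0})
  exact_mod_cast hle

end Aux

/-- If the minimum degree `d` of a graph on `n` vertices with no isolated
vertices satisfies `d ≤ (n-1)/2`, then the largest normalized Laplacian eigenvalue is at
least `1 + 1/√(d(n-1-d))`. -/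
theorem maxEigenvalue_ge_of_minDegree {V : Type*} [Fintype V] [DecidableEq V]
    (G : SimpleGraph V) [DecidableRel G.Adj] (n d : ℕ) (hn : n = Fintype.card V)
    (hdeg : ∀ v : V, 1 ≤ G.degree v)
    (hdmin : ∀ v : V, d ≤ G.degree v) (hdex : ∃ v : V, G.degree v = d)
    (hdle : (d : ℝ) ≤ ((n : ℝ) - 1) / 2)
    (lam : ℝ) (hlam : IsMaxNormLapEigenvalue G lam) :
    lam ≥ 1 + 1 / Real.sqrt ((d : ℝ) * ((n : ℝ) - 1 - (d : ℝ))) := by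
  classical
  obtain ⟨v, hv⟩ := hdex
  haveI : Nonempty V := ⟨v⟩
  set dR : ℝ := (d : ℝ) with hdR
  set m : ℝ := (n : ℝ) - 1 - dR with hm
  set N : Finset V := G.neighborFinset v with hN
  set S : Finset V := Finset.univ \ insert v N with hS
  have hvN : v ∉ N := by rw [hN]; exact SimpleGraph.notMem_neighborFinset_self G v
  have hNcard : N.card = d := by rw [hN, SimpleGraph.card_neighborFinset_eq_degree, hv]
  have hd1 : 1 ≤ d := hv ▸ hdeg v
  have hdn : d + 1 ≤ n := by
    have h1 : (insert v N).card ≤ Fintype.card V := Finset.card_le_univ _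
    rw [Finset.card_insert_of_notMem hvN, hNcard] at h1
    omega
  have hScard : S.card = n - (d + 1) := by
    rw [hS, Finset.card_sdiff_of_subset (Finset.subset_univ _), Finset.card_insert_of_notMem hvN,
      hNcard, Finset.card_univ, ← hn]
  have hSm : (S.card : ℝ) = m := by
    rw [hScard, hm, hdR]
    rw [Nat.cast_sub hdn]
    push_cast
    ring
  have hd1R : (1:ℝ) ≤ dR := by rw [hdR]; exact_mod_cast hd1
  have hdm : dR ≤ m := by rw [hm]; linarith [hdle]
  have hm1 : (1:ℝ) ≤ m := le_trans hd1R hdm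
  have hcase : m = dR ∨ dR + 1 ≤ m := by
    have hdS : d ≤ S.card := by
      have : (d:ℝ) ≤ (S.card : ℝ) := by rw [hSm, ← hdR]; exact hdm
      exact_mod_cast this
    rcases eq_or_lt_of_le hdS with h | h
    · left; rw [← hSm, ← h, hdR]
    · right
      have h2 : d + 1 ≤ S.card := h
      have : ((d:ℝ) + 1) ≤ (S.card : ℝ) := by exact_mod_cast h2
      rw [hSm, ← hdR] at this
      exact this
  set r : ℝ := Real.sqrt (dR * m) with hr
  have hdmpos : 0 < dR * m := mul_pos (by linarith) (by linarith)
  have hr0 : 0 < r := Real.sqrt_pos.2 hdmpos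
  have hr2 : r ^ 2 = dR * m := Real.sq_sqrt hdmpos.le
  set T2 : ℝ := ∑ x ∈ N, ((G.neighborFinset x ∩ N).card : ℝ) with hT2
  set EE : ℝ := ∑ x ∈ N, ((G.neighborFinset x ∩ S).card : ℝ) with hEE
  set E' : ℝ := ∑ x ∈ S, ((G.neighborFinset x ∩ N).card : ℝ) with hE'
  set S2 : ℝ := ∑ x ∈ S, ((G.neighborFinset x ∩ S).card : ℝ) with hS2
  set c : ℝ := EE / m ^ 2 with hc
  set f : V → ℝ := fun x => if x = v then r else if G.Adj v x then -1 else c with hf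
  -- basic membership facts
  have hmemN : ∀ {x : V}, x ∈ N ↔ G.Adj v x := by
    intro x; rw [hN, SimpleGraph.mem_neighborFinset]
  have hmemS : ∀ {x : V}, x ∈ S ↔ (x ≠ v ∧ ¬ G.Adj v x) := by
    intro x
    rw [hS]
    simp only [Finset.mem_sdiff, Finset.mem_univ, true_and, Finset.mem_insert, not_or]
    rw [hmemN]
  have hfv : f v = r := by rw [hf]; simp
  have hfN : ∀ x ∈ N, f x = -1 := by
    intro x hx
    have hadj : G.Adj v x := hmemN.1 hx
    have hxv : x ≠ v := fun h => G.irrefl (h ▸ hadj)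
    rw [hf]
    simp only [if_neg hxv, if_pos hadj]
  have hfS : ∀ x ∈ S, f x = c := by
    intro x hx
    obtain ⟨h1, h2⟩ := hmemS.1 hx
    rw [hf]
    simp only [if_neg h1, if_neg h2]
  -- the three indicator functions sum to 1
  have hsplit : ∀ y : V, f y = r * (if y = v then 1 else 0) + (-1) * (if y ∈ N then 1 else 0)
      + c * (if y ∈ S then 1 else 0) := by
    intro y
    by_cases h1 : y = v
    · subst h1
      have hyS : y ∉ S := fun h => (hmemS.1 h).1 rfl
      rw [hfv]
      simp [hvN, hyS]
    · by_cases h2 : y ∈ N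
      · have hyS : y ∉ S := fun h => (hmemS.1 h).2 (hmemN.1 h2)
        rw [hfN y h2]
        simp [h1, h2, hyS]
      · have hyS : y ∈ S := hmemS.2 ⟨h1, fun h => h2 (hmemN.2 h)⟩
        rw [hfS y hyS]
        simp [h1, h2, hyS]
  have hone : ∀ y : V, (1:ℝ) = (if y = v then 1 else 0) + (if y ∈ N then 1 else 0)
      + (if y ∈ S then 1 else 0) := by
    intro y
    by_cases h1 : y = v
    · subst h1
      have hyS : y ∉ S := fun h => (hmemS.1 h).1 rfl
      simp [if_neg hvN, if_neg hyS]
    · by_cases h2 : y ∈ N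
      · have hyS : y ∉ S := fun h => (hmemS.1 h).2 (hmemN.1 h2)
        simp [if_neg h1, if_pos h2, if_neg hyS]
      · have hyS : y ∈ S := hmemS.2 ⟨h1, fun h => h2 (hmemN.2 h)⟩
        simp [if_neg h1, if_neg h2, if_pos hyS]
  -- indicator sums over neighborhoods
  have hI1 : ∀ x : V, ∑ y ∈ G.neighborFinset x, (if y = v then (1:ℝ) else 0)
      = (if x ∈ N then 1 else 0) := by
    intro x
    rw [Finset.sum_ite_eq' (G.neighborFinset x) v (fun _ => (1:ℝ))]
    refine if_congr ?_ rfl rfl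
    rw [SimpleGraph.mem_neighborFinset, hmemN, SimpleGraph.adj_comm]
  have hI2 : ∀ (x : V) (A : Finset V), ∑ y ∈ G.neighborFinset x, (if y ∈ A then (1:ℝ) else 0)
      = ((G.neighborFinset x ∩ A).card : ℝ) := by
    intro x A
    rw [Finset.sum_boole, Finset.filter_mem_eq_inter]
  -- neighborhood sums of f and of 1
  have hNsum : ∀ x : V, ∑ y ∈ G.neighborFinset x, f y
      = r * (if x ∈ N then 1 else 0) - ((G.neighborFinset x ∩ N).card : ℝ)
        + c * ((G.neighborFinset x ∩ S).card : ℝ) := by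
    intro x
    rw [Finset.sum_congr rfl (fun y _ => hsplit y), Finset.sum_add_distrib,
      Finset.sum_add_distrib, ← Finset.mul_sum, ← Finset.mul_sum, ← Finset.mul_sum,
      hI1 x, hI2 x N, hI2 x S]
    ring
  have hdeg_dec : ∀ x : V, ((G.degree x : ℝ)) = (if x ∈ N then 1 else 0)
      + ((G.neighborFinset x ∩ N).card : ℝ) + ((G.neighborFinset x ∩ S).card : ℝ) := by
    intro x
    have h0 : ((G.degree x : ℝ)) = ∑ y ∈ G.neighborFinset x, (1:ℝ) := by
      rw [Finset.sum_const, nsmul_eq_mul, mul_one, SimpleGraph.card_neighborFinset_eq_degree]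
    rw [h0, Finset.sum_congr rfl (fun y _ => hone y), Finset.sum_add_distrib,
      Finset.sum_add_distrib, hI1 x, hI2 x N, hI2 x S]
  -- partition of the vertex set
  have hpart : ∀ w : V → ℝ, ∑ x : V, w x = w v + ∑ x ∈ N, w x + ∑ x ∈ S, w x := by
    intro w
    have h1 : ∑ x ∈ Finset.univ \ insert v N, w x + ∑ x ∈ insert v N, w x
        = ∑ x : V, w x := Finset.sum_sdiff (Finset.subset_univ _)
    rw [Finset.sum_insert hvN] at h1
    rw [← hS] at h1
    linarith
  -- global degree sums
  set DN : ℝ := ∑ x ∈ N, ((G.degree x : ℝ)) with hDN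
  set DS : ℝ := ∑ x ∈ S, ((G.degree x : ℝ)) with hDS
  have hSnotN : ∀ x ∈ S, x ∉ N := fun x hx h => (hmemS.1 hx).2 (hmemN.1 h)
  have hDNeq : DN = dR + T2 + EE := by
    rw [hDN, Finset.sum_congr rfl (fun x _ => hdeg_dec x), Finset.sum_add_distrib,
      Finset.sum_add_distrib]
    have h1 : ∑ x ∈ N, (if x ∈ N then (1:ℝ) else 0) = dR := by
      rw [Finset.sum_congr rfl (fun x hx => if_pos hx), Finset.sum_const, nsmul_eq_mul,
        mul_one, hNcard, hdR]
    rw [h1, ← hT2, ← hEE]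
  have hDSeq : DS = E' + S2 := by
    rw [hDS, Finset.sum_congr rfl (fun x _ => hdeg_dec x), Finset.sum_add_distrib,
      Finset.sum_add_distrib]
    have h1 : ∑ x ∈ S, (if x ∈ N then (1:ℝ) else 0) = 0 := by
      rw [Finset.sum_congr rfl (fun x hx => if_neg (hSnotN x hx)), Finset.sum_const,
        smul_zero]
    rw [h1, ← hE', ← hS2]
    ring
  -- double counting: EE = E'
  have hinter : ∀ (x : V) (A : Finset V), ((G.neighborFinset x ∩ A).card : ℝ)
      = ∑ y ∈ A, (if G.Adj x y then (1:ℝ) else 0) := by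
    intro x A
    rw [Finset.sum_boole]
    congr 1
    congr 1
    ext y
    simp only [Finset.mem_inter, SimpleGraph.mem_neighborFinset, Finset.mem_filter]
    tauto
  have hEE'eq : EE = E' := by
    rw [hEE, hE']
    calc ∑ x ∈ N, ((G.neighborFinset x ∩ S).card : ℝ)
        = ∑ x ∈ N, ∑ y ∈ S, (if G.Adj x y then (1:ℝ) else 0) :=
          Finset.sum_congr rfl (fun x _ => hinter x S)
      _ = ∑ y ∈ S, ∑ x ∈ N, (if G.Adj x y then (1:ℝ) else 0) := Finset.sum_comm
      _ = ∑ y ∈ S, ((G.neighborFinset y ∩ N).card : ℝ) := by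
          refine Finset.sum_congr rfl (fun y _ => ?_)
          rw [hinter y N]
          exact Finset.sum_congr rfl (fun x _ => if_congr (G.adj_comm x y) rfl rfl)
  -- bounds
  have hT20 : 0 ≤ T2 := Finset.sum_nonneg (fun x _ => Nat.cast_nonneg _)
  have hS20 : 0 ≤ S2 := Finset.sum_nonneg (fun x _ => Nat.cast_nonneg _)
  have hEE0 : 0 ≤ EE := Finset.sum_nonneg (fun x _ => Nat.cast_nonneg _)
  have hT2b : T2 ≤ dR * (dR - 1) := by
    have hpt : ∀ x ∈ N, ((G.neighborFinset x ∩ N).card : ℝ) ≤ dR - 1 := by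
      intro x hx
      have hsub : G.neighborFinset x ∩ N ⊆ N.erase x := by
        intro y hy
        rw [Finset.mem_inter] at hy
        rw [Finset.mem_erase]
        exact ⟨fun h => G.irrefl (h ▸ (SimpleGraph.mem_neighborFinset G x y).1 hy.1),
          hy.2⟩
      have h1 : (G.neighborFinset x ∩ N).card ≤ (N.erase x).card := Finset.card_le_card hsub
      have h2 : (N.erase x).card = d - 1 := by rw [Finset.card_erase_of_mem hx, hNcard]
      have h3 : (G.neighborFinset x ∩ N).card ≤ d - 1 := h2 ▸ h1
      have h4 : ((G.neighborFinset x ∩ N).card : ℝ) ≤ ((d - 1 : ℕ) : ℝ) := by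
        exact_mod_cast h3
      rw [Nat.cast_sub hd1] at h4
      rw [hdR]
      simpa using h4
    calc T2 ≤ ∑ _x ∈ N, (dR - 1) := Finset.sum_le_sum hpt
      _ = dR * (dR - 1) := by
          rw [Finset.sum_const, nsmul_eq_mul, hNcard, hdR]
  have hScard1 : 1 ≤ S.card := by
    have h1 : (1:ℝ) ≤ (S.card : ℝ) := by rw [hSm]; exact hm1
    exact_mod_cast h1
  have hS2b : S2 ≤ m * (m - 1) := by
    have hpt : ∀ x ∈ S, ((G.neighborFinset x ∩ S).card : ℝ) ≤ m - 1 := by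
      intro x hx
      have hsub : G.neighborFinset x ∩ S ⊆ S.erase x := by
        intro y hy
        rw [Finset.mem_inter] at hy
        rw [Finset.mem_erase]
        exact ⟨fun h => G.irrefl (h ▸ (SimpleGraph.mem_neighborFinset G x y).1 hy.1),
          hy.2⟩
      have h1 : (G.neighborFinset x ∩ S).card ≤ (S.erase x).card := Finset.card_le_card hsub
      have h2 : (S.erase x).card = S.card - 1 := Finset.card_erase_of_mem hx
      have h4 : ((G.neighborFinset x ∩ S).card : ℝ) ≤ ((S.card - 1 : ℕ) : ℝ) := by
        exact_mod_cast h2 ▸ h1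
      rw [Nat.cast_sub hScard1, hSm] at h4
      simpa using h4
    calc S2 ≤ ∑ _x ∈ S, (m - 1) := Finset.sum_le_sum hpt
      _ = m * (m - 1) := by rw [Finset.sum_const, nsmul_eq_mul, hSm]
  have hEEb : EE ≤ dR * m := by
    have hpt : ∀ x ∈ N, ((G.neighborFinset x ∩ S).card : ℝ) ≤ m := by
      intro x _
      have h1 : (G.neighborFinset x ∩ S).card ≤ S.card :=
        Finset.card_le_card Finset.inter_subset_right
      have h2 : ((G.neighborFinset x ∩ S).card : ℝ) ≤ (S.card : ℝ) := by exact_mod_cast h1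
      rwa [hSm] at h2
    calc EE ≤ ∑ _x ∈ N, m := Finset.sum_le_sum hpt
      _ = dR * m := by rw [Finset.sum_const, nsmul_eq_mul, hNcard, hdR]
  have hDSb : dR * m ≤ DS := by
    have hpt : ∀ x ∈ S, dR ≤ ((G.degree x : ℝ)) := by
      intro x _
      rw [hdR]
      exact_mod_cast hdmin x
    calc dR * m = ∑ _x ∈ S, dR := by rw [Finset.sum_const, nsmul_eq_mul, hSm]; ring
      _ ≤ DS := Finset.sum_le_sum hpt
  have hdsES : dR * m ≤ EE + S2 := by
    rw [hEE'eq]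
    calc dR * m ≤ DS := hDSb
      _ = E' + S2 := hDSeq
  -- the test vector
  set u : V → ℝ := fun x => Real.sqrt (G.degree x) * f x with hu
  set g : EuclideanSpace ℝ V := (WithLp.equiv 2 (V → ℝ)).symm u with hg
  have hsq : ∀ x : V, (0:ℝ) < Real.sqrt (G.degree x) := by
    intro x
    apply Real.sqrt_pos.2
    exact_mod_cast Nat.lt_of_lt_of_le Nat.zero_lt_one (hdeg x)
  set W : ℝ := dR * r ^ 2 + DN + c ^ 2 * DS with hWdef
  have hW : ∑ x : V, ((G.degree x : ℝ)) * f x ^ 2 = W := by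
    rw [hpart (fun x => ((G.degree x : ℝ)) * f x ^ 2)]
    have h1 : ((G.degree v : ℝ)) * f v ^ 2 = dR * r ^ 2 := by
      rw [hfv, hv, hdR]
    have h2 : ∑ x ∈ N, ((G.degree x : ℝ)) * f x ^ 2 = DN :=
      Finset.sum_congr rfl (fun x hx => by rw [hfN x hx]; ring)
    have h3 : ∑ x ∈ S, ((G.degree x : ℝ)) * f x ^ 2 = c ^ 2 * DS := by
      rw [hDS, Finset.mul_sum]
      exact Finset.sum_congr rfl (fun x hx => by rw [hfS x hx]; ring)
    rw [h1, h2, h3, hWdef]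
  have hDN0 : 0 ≤ DN := Finset.sum_nonneg (fun x _ => Nat.cast_nonneg _)
  have hDS0 : 0 ≤ DS := Finset.sum_nonneg (fun x _ => Nat.cast_nonneg _)
  have hWpos : 0 < W := by
    rw [hWdef]
    have h1 : 0 < dR * r ^ 2 := by positivity
    linarith [mul_nonneg (sq_nonneg c) hDS0]
  -- value of the quadratic form
  set Cq : ℝ := -(2 * r * dR) + T2 - 2 * c * EE + c ^ 2 * S2 with hCq
  have hC : ∑ x : V, f x * (∑ y ∈ G.neighborFinset x, f y) = Cq := by
    rw [hpart (fun x => f x * (∑ y ∈ G.neighborFinset x, f y))]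
    have hNN : G.neighborFinset v ∩ N = N := by rw [← hN, Finset.inter_self]
    have hNS : G.neighborFinset v ∩ S = ∅ := by
      rw [← hN]
      apply Finset.eq_empty_of_forall_notMem
      intro y hy
      rw [Finset.mem_inter] at hy
      exact (hmemS.1 hy.2).2 (hmemN.1 hy.1)
    have h1 : f v * (∑ y ∈ G.neighborFinset v, f y) = -(r * dR) := by
      rw [hfv, hNsum v, if_neg hvN, hNN, hNS, hNcard]
      simp [hdR]
    have h2 : ∑ x ∈ N, f x * (∑ y ∈ G.neighborFinset x, f y)
        = -(r * dR) + T2 - c * EE := by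
      have hterm : ∀ x ∈ N, f x * (∑ y ∈ G.neighborFinset x, f y)
          = -r + (((G.neighborFinset x ∩ N).card : ℝ)
            + (-c) * ((G.neighborFinset x ∩ S).card : ℝ)) := by
        intro x hx
        rw [hfN x hx, hNsum x, if_pos hx]
        ring
      rw [Finset.sum_congr rfl hterm, Finset.sum_add_distrib, Finset.sum_add_distrib,
        ← Finset.mul_sum, Finset.sum_const, nsmul_eq_mul, hNcard, ← hT2, ← hEE]
      rw [hdR]
      ring
    have h3 : ∑ x ∈ S, f x * (∑ y ∈ G.neighborFinset x, f y)
        = -(c * E') + c ^ 2 * S2 := by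
      have hterm : ∀ x ∈ S, f x * (∑ y ∈ G.neighborFinset x, f y)
          = (-c) * ((G.neighborFinset x ∩ N).card : ℝ)
            + (c * c) * ((G.neighborFinset x ∩ S).card : ℝ) := by
        intro x hx
        rw [hfS x hx, hNsum x, if_neg (hSnotN x hx)]
        ring
      rw [Finset.sum_congr rfl hterm, Finset.sum_add_distrib, ← Finset.mul_sum,
        ← Finset.mul_sum, ← hE', ← hS2]
      ring
    rw [h1, h2, h3, hCq, hEE'eq]
    ring
  -- inner product and norm of the test vector
  have hgx : ∀ x : V, g x = u x := fun x => rfl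
  have hTgx : ∀ x : V, ((Matrix.toEuclideanLin (symMat G)) g) x
      = u x - ∑ y ∈ G.neighborFinset x,
          u y / (Real.sqrt (G.degree x) * Real.sqrt (G.degree y)) := by
    intro x
    rw [hg, ← symMat_mulVec G u x]
    rfl
  have hux2 : ∀ x : V, u x * u x = ((G.degree x : ℝ)) * f x ^ 2 := by
    intro x
    rw [hu]
    have h5 : Real.sqrt (G.degree x) * Real.sqrt (G.degree x) = ((G.degree x : ℝ)) :=
      Real.mul_self_sqrt (Nat.cast_nonneg _)
    linear_combination (f x ^ 2) * h5
  have huterm : ∀ x : V, (∑ y ∈ G.neighborFinset x,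
      u y / (Real.sqrt (G.degree x) * Real.sqrt (G.degree y))) * u x
      = f x * (∑ y ∈ G.neighborFinset x, f y) := by
    intro x
    rw [Finset.sum_mul, Finset.mul_sum]
    refine Finset.sum_congr rfl (fun y _ => ?_)
    rw [hu]
    have hx0 := (hsq x).ne'
    have hy0 := (hsq y).ne'
    field_simp
  have hinner : (inner ℝ ((Matrix.toEuclideanLin (symMat G)) g) g : ℝ) = W - Cq := by
    rw [real_inner_comm, PiLp.inner_apply]
    simp only [RCLike.inner_apply, conj_trivial]
    calc ∑ x : V, ((Matrix.toEuclideanLin (symMat G)) g) x * g x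
        = ∑ x : V, (((G.degree x : ℝ)) * f x ^ 2
          - f x * (∑ y ∈ G.neighborFinset x, f y)) := by
          refine Finset.sum_congr rfl (fun x _ => ?_)
          rw [hTgx x, hgx x, sub_mul, hux2 x, huterm x]
      _ = W - Cq := by rw [Finset.sum_sub_distrib, hW, hC]
  have hnorm : ‖g‖ ^ 2 = W := by
    rw [← real_inner_self_eq_norm_sq, PiLp.inner_apply]
    simp only [RCLike.inner_apply, conj_trivial]
    calc ∑ x : V, g x * g x = ∑ x : V, ((G.degree x : ℝ)) * f x ^ 2 :=
          Finset.sum_congr rfl (fun x _ => by rw [hgx x, hux2 x])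
      _ = W := hW
  have hgne : g ≠ 0 := by
    intro h0
    have h1 : u v = 0 := by
      rw [← hgx v, h0]
      rfl
    rw [hu] at h1
    simp only at h1
    rw [hfv] at h1
    have h2 := mul_pos (hsq v) hr0
    linarith
  -- spectral argument
  obtain ⟨μ, hμeig, hμge⟩ := rayleigh_le_eig G g hgne
  have hlam2 : μ ≤ lam := hlam.2 μ (transfer_eig G hdeg μ hμeig)
  have hCkey := keyIneqAux dR m r EE T2 S2 hd1R hcase hr2 hr0 hT20 hT2b hS20 hS2b hEE0
    hEEb hdsES
  have hfinal : r * Cq + W ≤ 0 := by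
    have hWeq2 : W = dR * r ^ 2 + (dR + T2 + EE) + c ^ 2 * (EE + S2) := by
      rw [hWdef, hDNeq, hDSeq, hEE'eq]
    calc r * Cq + W
        = r * (-(2 * r * dR) + T2 - 2 * (EE / m ^ 2) * EE + (EE / m ^ 2) ^ 2 * S2)
          + (dR * r ^ 2 + (dR + T2 + EE) + (EE / m ^ 2) ^ 2 * (EE + S2)) := by
          rw [hCq, hWeq2, hc]
      _ ≤ 0 := hCkey
  have hquot : 1 + 1 / r ≤ (inner ℝ ((Matrix.toEuclideanLin (symMat G)) g) g : ℝ) / ‖g‖ ^ 2 := by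
    rw [hinner, hnorm, le_div_iff₀ hWpos]
    have h8 : (1 + 1 / r) * W - (W - Cq) = (1 / r) * (r * Cq + W) := by
      field_simp
      ring
    linarith [mul_nonpos_of_nonneg_of_nonpos (le_of_lt (one_div_pos.2 hr0)) hfinal]
  have hfin : 1 + 1 / r ≤ lam := le_trans (le_trans hquot hμge) hlam2
  exact hfin
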